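/- Let G be a group generated by a finite set S, equipped with the word metric d_S, and let H ≤ G be a subgroup. Then for all r ≥ 1 and A ≥ 0 there exists R ≥ A such that every shallow (r,A)-coarse complementary component of H is contained in N_R(H). -/

import Mathlib

open Metric Set
open scoped NNReal Pointwise

/-- The closed `r`-neighbourhood `N_r(A)` of a subset `A` of a metric space. -/
def nbhd {X : Type*} [PseudoMetricSpace X] (r : ℝ≥0) (A : Set X) : Set X :=
  {x : X | ∃ a ∈ A, nndist x a ≤ r}

/-- The word length of `g` with respect to a generating set `S`: the least `n` such
that `g` is a product of `n` elements of `S ∪ S⁻¹`. -/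
noncomputable def wordLength {G : Type*} [Group G] (S : Set G) (g : G) : ℕ :=
  sInf {n : ℕ | ∃ l : List G, (∀ x ∈ l, x ∈ S ∨ x⁻¹ ∈ S) ∧ l.prod = g ∧ l.length = n}

/-- The metric on `G` is the word metric with respect to `S`. -/
def IsWordMetric {G : Type*} [Group G] [MetricSpace G] (S : Set G) : Prop :=
  ∀ g h : G, dist g h = wordLength S (g⁻¹ * h)

/-- A subset `A ⊆ G` is `H`-finite if `A ⊆ H·R` for some finite `R ⊆ G`. -/
def HFinite {G : Type*} [Group G] (H : Subgroup G) (A : Set G) : Prop :=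
  ∃ R : Set G, R.Finite ∧ A ⊆ (H : Set G) * R

/-- The coarse `r`-boundary `∂_r C := {x ∈ X \ C : d(x,C) ≤ r}`. -/
def coarseBoundary {X : Type*} [PseudoMetricSpace X] (r : ℝ≥0) (C : Set X) : Set X :=
  {x : X | x ∉ C ∧ ∃ c ∈ C, nndist x c ≤ r}

/-- `C` is an `(r,A)`-coarse complementary component of `W`:
`∂_r (C \ N_A(W)) ⊆ N_A(W)`. -/
def IsCCC {X : Type*} [PseudoMetricSpace X] (r A : ℝ≥0) (W C : Set X) : Prop :=
  coarseBoundary r (C \ nbhd A W) ⊆ nbhd A W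

/-- `C` is a coarse complementary component of `W`, i.e. an `(r,A)`-coarse complementary
component for some `r ≥ 1`, `A ≥ 0`. -/
def IsCoarseCompComplement {X : Type*} [PseudoMetricSpace X] (W C : Set X) : Prop :=
  ∃ r A : ℝ≥0, 1 ≤ r ∧ IsCCC r A W C

/-- A coarse complementary component is shallow if contained in some neighbourhood of
`W`, and deep otherwise. -/
def IsShallow {X : Type*} [PseudoMetricSpace X] (W C : Set X) : Prop :=
  ∃ R : ℝ≥0, C ⊆ nbhd R W

namespace CCCAux

variable {G : Type*} [Group G] {S : Set G}

lemma wl_rep_nonempty (hSgen : Subgroup.closure S = ⊤) (g : G) :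
    {n : ℕ | ∃ l : List G, (∀ x ∈ l, x ∈ S ∨ x⁻¹ ∈ S) ∧ l.prod = g ∧ l.length = n}.Nonempty := by
  have hg : g ∈ Submonoid.closure (S ∪ S⁻¹) := by
    have h' : g ∈ (Subgroup.closure S).toSubmonoid := by simp [hSgen]
    rwa [Subgroup.closure_toSubmonoid] at h'
  obtain ⟨l, hl, hprod⟩ := Submonoid.exists_list_of_mem_closure hg
  refine ⟨l.length, l, fun x hx => ?_, hprod, rfl⟩
  rcases hl x hx with h | h
  · exact Or.inl h
  · exact Or.inr (Set.mem_inv.mp h)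

lemma wordLength_spec (hSgen : Subgroup.closure S = ⊤) (g : G) :
    ∃ l : List G, (∀ x ∈ l, x ∈ S ∨ x⁻¹ ∈ S) ∧ l.prod = g ∧ l.length = wordLength S g :=
  Nat.sInf_mem (wl_rep_nonempty hSgen g)

lemma wordLength_le_length (l : List G) (hl : ∀ x ∈ l, x ∈ S ∨ x⁻¹ ∈ S) :
    wordLength S l.prod ≤ l.length :=
  Nat.sInf_le ⟨l, hl, rfl, rfl⟩

lemma wordLength_mul_le (hSgen : Subgroup.closure S = ⊤) (a b : G) :
    wordLength S (a * b) ≤ wordLength S a + wordLength S b := by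
  obtain ⟨la, hla, hpa, hlena⟩ := wordLength_spec hSgen a
  obtain ⟨lb, hlb, hpb, hlenb⟩ := wordLength_spec hSgen b
  have h := wordLength_le_length (S := S) (la ++ lb) (by
    intro x hx
    rcases List.mem_append.mp hx with h | h
    · exact hla x h
    · exact hlb x h)
  simpa [hpa, hpb, hlena, hlenb] using h

lemma wordLength_inv (hSgen : Subgroup.closure S = ⊤) (g : G) :
    wordLength S g⁻¹ = wordLength S g := by
  have key : ∀ g : G, wordLength S g⁻¹ ≤ wordLength S g := by
    intro g
    obtain ⟨l, hl, hp, hlen⟩ := wordLength_spec hSgen g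
    have h := wordLength_le_length (S := S) ((l.map fun x => x⁻¹).reverse) (by
      intro x hx
      simp only [List.mem_reverse, List.mem_map] at hx
      obtain ⟨y, hy, rfl⟩ := hx
      rcases hl y hy with h | h
      · exact Or.inr (by simpa using h)
      · exact Or.inl h)
    rw [← List.prod_inv_reverse, hp] at h
    simpa [hlen] using h
  refine le_antisymm (key g) ?_
  simpa using key g⁻¹

lemma ball_finite (hSfin : S.Finite) (hSgen : Subgroup.closure S = ⊤) (n : ℕ) :
    {g : G | wordLength S g ≤ n}.Finite := by
  induction n with
  | zero =>
    refine (Set.finite_singleton (1 : G)).subset ?_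
    intro g hg
    simp only [Set.mem_setOf_eq] at hg
    obtain ⟨l, hl, hp, hlen⟩ := wordLength_spec hSgen g
    have : l.length = 0 := by omega
    rw [List.length_eq_zero_iff] at this
    simp [this] at hp
    simp [← hp]
  | succ n ih =>
    have hT : (insert (1 : G) (S ∪ S⁻¹)).Finite := (hSfin.union hSfin.inv).insert 1
    refine (hT.mul ih).subset ?_
    intro g hg
    simp only [Set.mem_setOf_eq] at hg
    obtain ⟨l, hl, hp, hlen⟩ := wordLength_spec hSgen g
    match l, hl, hp, hlen with
    | [], _, hp, _ =>
      have hg1 : g = 1 := by simpa using hp.symm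
      have h1 : wordLength S (1 : G) ≤ n :=
        le_trans (by simpa using wordLength_le_length (S := S) [] (by simp)) (Nat.zero_le n)
      exact ⟨1, Set.mem_insert 1 _, 1, h1, by simp [hg1]⟩
    | a :: t, hl, hp, hlen =>
      have hg' : g = a * t.prod := by rw [← hp]; simp
      have ha : a ∈ insert (1 : G) (S ∪ S⁻¹) := by
        rcases hl a List.mem_cons_self with h | h
        · exact Set.mem_insert_iff.mpr (Or.inr (Or.inl h))
        · exact Set.mem_insert_iff.mpr (Or.inr (Or.inr (Set.mem_inv.mpr h)))
      have ht : wordLength S t.prod ≤ n := by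
        have h1 := wordLength_le_length (S := S) t (fun x hx => hl x (List.mem_cons_of_mem a hx))
        have h2 : t.length ≤ n := by simp at hlen; omega
        omega
      rw [hg']
      exact Set.mul_mem_mul ha ht

/-- ℕ-valued word distance. -/
noncomputable def dN (S : Set G) (x y : G) : ℕ := wordLength S (x⁻¹ * y)

lemma dN_symm (hSgen : Subgroup.closure S = ⊤) (x y : G) : dN S x y = dN S y x := by
  rw [dN, dN, ← wordLength_inv hSgen]
  congr 1
  group

lemma dN_triangle (hSgen : Subgroup.closure S = ⊤) (x y z : G) :
    dN S x z ≤ dN S x y + dN S y z := by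
  have := wordLength_mul_le hSgen (x⁻¹ * y) (y⁻¹ * z)
  simpa [dN, mul_assoc] using this

lemma dN_mul (g x y : G) : dN S (g * x) (g * y) = dN S x y := by
  simp [dN, mul_assoc]

/-- ℕ-valued distance to the subgroup `H`. -/
noncomputable def fN (S : Set G) (H : Subgroup G) (x : G) : ℕ :=
  sInf {n : ℕ | ∃ h ∈ H, dN S x h = n}

lemma fN_mem (S : Set G) (H : Subgroup G) (x : G) : ∃ h ∈ H, dN S x h = fN S H x :=
  Nat.sInf_mem (⟨dN S x 1, ⟨1, H.one_mem, rfl⟩⟩ : {n : ℕ | ∃ h ∈ H, dN S x h = n}.Nonempty)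

lemma fN_le (S : Set G) (H : Subgroup G) {x h : G} (hh : h ∈ H) : fN S H x ≤ dN S x h :=
  Nat.sInf_le ⟨h, hh, rfl⟩

lemma fN_mul (S : Set G) (H : Subgroup G) {g : G} (hg : g ∈ H) (x : G) :
    fN S H (g * x) = fN S H x := by
  have key : ∀ g : G, g ∈ H → ∀ x : G, fN S H (g * x) ≤ fN S H x := by
    intro g hg x
    obtain ⟨h, hh, hd⟩ := fN_mem S H x
    have : dN S (g * x) (g * h) = dN S x h := dN_mul g x h
    calc fN S H (g * x) ≤ dN S (g * x) (g * h) := fN_le S H (H.mul_mem hg hh)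
      _ = fN S H x := by rw [this, hd]
  refine le_antisymm (key g hg x) ?_
  have := key g⁻¹ (H.inv_mem hg) (g * x)
  simpa using this

lemma fN_triangle (hSgen : Subgroup.closure S = ⊤) (H : Subgroup G) (x y : G) :
    fN S H x ≤ fN S H y + dN S x y := by
  obtain ⟨h, hh, hd⟩ := fN_mem S H y
  calc fN S H x ≤ dN S x h := fN_le S H hh
    _ ≤ dN S x y + dN S y h := dN_triangle hSgen x y h
    _ = fN S H y + dN S x y := by rw [hd]; omega

end CCCAux

namespace CCCAux

variable {G : Type*} [Group G] [MetricSpace G] {S : Set G}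

lemma nndist_le_iff (hword : IsWordMetric S) (x y : G) (ρ : ℝ≥0) :
    nndist x y ≤ ρ ↔ (dN S x y : ℝ) ≤ (ρ : ℝ) := by
  rw [← NNReal.coe_le_coe, coe_nndist, hword x y]
  exact Iff.rfl

lemma nndist_smul (hword : IsWordMetric S) (g x y : G) :
    nndist (g * x) (g * y) = nndist x y := by
  apply NNReal.coe_injective
  rw [coe_nndist, coe_nndist, hword, hword]
  norm_cast
  exact congrArg _ (by group)

lemma mem_nbhd_iff (hword : IsWordMetric S) (H : Subgroup G) (ρ : ℝ≥0) (x : G) :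
    x ∈ nbhd ρ (H : Set G) ↔ (fN S H x : ℝ) ≤ (ρ : ℝ) := by
  constructor
  · rintro ⟨a, ha, hd⟩
    rw [nndist_le_iff hword] at hd
    exact le_trans (by exact_mod_cast Nat.cast_le.mpr (fN_le S H ha)) hd
  · intro hle
    obtain ⟨h, hh, hd⟩ := fN_mem S H x
    exact ⟨h, hh, (nndist_le_iff hword x h ρ).mpr (by rw [hd]; exact hle)⟩

lemma mem_nbhd_smul (hword : IsWordMetric S) (H : Subgroup G) {g : G} (hg : g ∈ H)
    (ρ : ℝ≥0) (x : G) : g * x ∈ nbhd ρ (H : Set G) ↔ x ∈ nbhd ρ (H : Set G) := by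
  rw [mem_nbhd_iff hword, mem_nbhd_iff hword, fN_mul S H hg]

/-- One step of an `r`-chain avoiding `N_A(H)`. -/
def Step (r A : ℝ≥0) (H : Subgroup G) (x y : G) : Prop :=
  x ∉ nbhd A (H : Set G) ∧ y ∉ nbhd A (H : Set G) ∧ nndist x y ≤ r

/-- `r`-chains avoiding `N_A(H)`. -/
def Chain (r A : ℝ≥0) (H : Subgroup G) : G → G → Prop :=
  Relation.ReflTransGen (Step r A H)

lemma step_symm {r A : ℝ≥0} {H : Subgroup G} : Symmetric (Step r A H) :=
  fun _ _ ⟨a, b, c⟩ => ⟨b, a, by rwa [nndist_comm]⟩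

lemma chain_symm {r A : ℝ≥0} {H : Subgroup G} {x y : G} (h : Chain r A H x y) :
    Chain r A H y x :=
  haveI : Std.Symm (Step r A H) := ⟨fun _ _ h => step_symm h⟩
  Std.Symm.symm (r := Relation.ReflTransGen (Step r A H)) x y h

lemma chain_smul (hword : IsWordMetric S) {r A : ℝ≥0} {H : Subgroup G} {g : G}
    (hg : g ∈ H) {x y : G} (h : Chain r A H x y) : Chain r A H (g * x) (g * y) := by
  refine Relation.ReflTransGen.lift (fun z => g * z) ?_ x y h
  rintro a b ⟨haN, hbN, hd⟩
  exact ⟨fun hmem => haN ((mem_nbhd_smul hword H hg A a).mp hmem),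
    fun hmem => hbN ((mem_nbhd_smul hword H hg A b).mp hmem),
    by rwa [nndist_smul hword]⟩

lemma chain_mem_of_CCC {r A : ℝ≥0} {H : Subgroup G} {C : Set G}
    (hC : IsCCC r A (H : Set G) C) {x y : G} (hx : x ∈ C)
    (hxN : x ∉ nbhd A (H : Set G)) (hch : Chain r A H x y) : y ∈ C := by
  induction hch with
  | refl => exact hx
  | @tail b c hab hbc ih =>
    obtain ⟨hbN, hcN, hd⟩ := hbc
    by_contra hc
    exact hcN (hC ⟨fun hmem => hc hmem.1, b, ⟨ih, hbN⟩, by rwa [nndist_comm]⟩)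

lemma descend (hword : IsWordMetric S) (hSgen : Subgroup.closure S = ⊤)
    (H : Subgroup G) (r A : ℝ≥0) (hr : 1 ≤ r) :
    ∀ m : ℕ, ∀ x : G, fN S H x = m → x ∉ nbhd A (H : Set G) →
      ∃ y, Chain r A H x y ∧ fN S H y ≤ Nat.floor (A : ℝ) + 1 := by
  intro m
  induction m using Nat.strong_induction_on with
  | _ m ih =>
    intro x hm hxN
    set k := Nat.floor (A : ℝ) + 1 with hk
    by_cases hxk : fN S H x ≤ k
    · exact ⟨x, Relation.ReflTransGen.refl, hxk⟩
    · push_neg at hxk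
      rw [hm] at hxk
      obtain ⟨h, hh, hd⟩ := fN_mem S H x
      obtain ⟨l, hl, hp, hlen⟩ := wordLength_spec hSgen (x⁻¹ * h)
      have hdm : wordLength S (x⁻¹ * h) = m := by rw [← hm, ← hd]; rfl
      match l, hl, hp, hlen with
      | [], _, hp, hlen =>
        exfalso
        simp only [List.length_nil] at hlen
        omega
      | a :: t, hl, hp, hlen =>
        set y := x * a with hy
        have hdxy : dN S x y ≤ 1 := by
          have h1 := wordLength_le_length (S := S) [a] (by
            intro z hz
            simp only [List.mem_singleton] at hz
            rw [hz]
            exact hl a List.mem_cons_self)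
          simpa [dN, hy] using h1
        have heq : dN S y h = wordLength S t.prod := by
          have hprod : t.prod = a⁻¹ * (x⁻¹ * h) := by rw [← hp]; simp
          rw [dN, hy, hprod]
          congr 1
          rw [mul_inv_rev, mul_assoc]
        have hdyh : dN S y h ≤ m - 1 := by
          have h1 := wordLength_le_length (S := S) t
            (fun z hz => hl z (List.mem_cons_of_mem a hz))
          simp only [List.length_cons] at hlen
          omega
        have hfy_le : fN S H y ≤ m - 1 := le_trans (fN_le S H hh) hdyh
        have hfy_ge : m ≤ fN S H y + 1 := by
          have h1 := fN_triangle hSgen H x y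
          omega
        have hAk : (A : ℝ) < (k : ℝ) := by
          rw [hk]
          push_cast
          exact Nat.lt_floor_add_one _
        have hyN : y ∉ nbhd A (H : Set G) := by
          intro hmem
          rw [mem_nbhd_iff hword] at hmem
          have h1 : (k : ℝ) ≤ (fN S H y : ℝ) := by exact_mod_cast (by omega : k ≤ fN S H y)
          linarith
        have hstep : Step r A H x y := by
          refine ⟨hxN, hyN, ?_⟩
          rw [nndist_le_iff hword]
          calc (dN S x y : ℝ) ≤ 1 := by exact_mod_cast hdxy
            _ ≤ (r : ℝ) := by exact_mod_cast hr
        obtain ⟨z, hz, hzk⟩ := ih (fN S H y) (by omega) y rfl hyN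
        exact ⟨z, Relation.ReflTransGen.head hstep hz, hzk⟩

end CCCAux

/-- Let `G` be a group generated by a finite set `S`, with the word
metric, and `H ≤ G` a subgroup. For all `r ≥ 1` and `A ≥ 0` there exists `R ≥ A` such
that every shallow `(r,A)`-coarse complementary component of `H` is contained in
`N_R(H)`. -/
theorem shallow_coarseComp_uniformly_bounded {G : Type*} [Group G] [MetricSpace G]
    (S : Set G) (hSfin : S.Finite) (hSgen : Subgroup.closure S = ⊤)
    (hword : IsWordMetric S) (H : Subgroup G) (r A : ℝ≥0) (hr : 1 ≤ r) :
    ∃ R : ℝ≥0, A ≤ R ∧ ∀ C : Set G, IsCCC r A (H : Set G) C →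
      IsShallow (H : Set G) C → C ⊆ nbhd R (H : Set G) := by
  classical
  set k := Nat.floor (A : ℝ) + 1 with hk
  have hBfin := CCCAux.ball_finite hSfin hSgen k
  let bound : G → ℕ := fun b =>
    if hb : ∃ n : ℕ, ∀ z, CCCAux.Chain r A H b z → CCCAux.fN S H z ≤ n then hb.choose else 0
  have hbound : ∀ b, (∃ n : ℕ, ∀ z, CCCAux.Chain r A H b z → CCCAux.fN S H z ≤ n) →
      ∀ z, CCCAux.Chain r A H b z → CCCAux.fN S H z ≤ bound b := by
    intro b hb z hz
    simp only [bound, dif_pos hb]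
    exact hb.choose_spec z hz
  set R₀ := hBfin.toFinset.sup bound with hR₀
  refine ⟨A + (R₀ : ℝ≥0), le_self_add, ?_⟩
  intro C hC hshallow x hx
  rw [CCCAux.mem_nbhd_iff hword]
  have hcast : ((A + (R₀ : ℝ≥0) : ℝ≥0) : ℝ) = (A : ℝ) + (R₀ : ℝ) := by push_cast; ring
  rw [hcast]
  have hR₀0 : (0 : ℝ) ≤ (R₀ : ℝ) := Nat.cast_nonneg _
  by_cases hxN : x ∈ nbhd A (H : Set G)
  · have h1 := (CCCAux.mem_nbhd_iff hword H A x).mp hxN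
    linarith
  · obtain ⟨RS, hRS⟩ := hshallow
    obtain ⟨y, hxy, hyk⟩ := CCCAux.descend hword hSgen H r A hr (CCCAux.fN S H x) x rfl hxN
    obtain ⟨h, hh, hdyh⟩ := CCCAux.fN_mem S H y
    have hbB : h⁻¹ * y ∈ hBfin.toFinset := by
      rw [Set.Finite.mem_toFinset]
      show wordLength S (h⁻¹ * y) ≤ k
      have h1 : wordLength S (h⁻¹ * y) = CCCAux.dN S h y := rfl
      rw [h1, CCCAux.dN_symm hSgen h y, hdyh]
      exact hyk
    have hyx := CCCAux.chain_symm hxy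
    have hbx : CCCAux.Chain r A H (h⁻¹ * y) (h⁻¹ * x) :=
      CCCAux.chain_smul hword (H.inv_mem hh) hyx
    have hex : ∃ n : ℕ, ∀ z, CCCAux.Chain r A H (h⁻¹ * y) z → CCCAux.fN S H z ≤ n := by
      refine ⟨Nat.floor (RS : ℝ), fun z hz => ?_⟩
      have h1 : CCCAux.Chain r A H y (h * z) := by
        have h2 := CCCAux.chain_smul hword hh hz
        rwa [mul_inv_cancel_left] at h2
      have h3 : CCCAux.Chain r A H x (h * z) := Relation.ReflTransGen.trans hxy h1
      have h4 : h * z ∈ C := CCCAux.chain_mem_of_CCC hC hx hxN h3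
      have h5 := (CCCAux.mem_nbhd_iff hword H RS _).mp (hRS h4)
      rw [CCCAux.fN_mul S H hh] at h5
      exact Nat.le_floor h5
    have h5 : CCCAux.fN S H (h⁻¹ * x) ≤ bound (h⁻¹ * y) := hbound _ hex _ hbx
    have h6 : CCCAux.fN S H x ≤ R₀ := by
      have h7 : CCCAux.fN S H (h⁻¹ * x) = CCCAux.fN S H x :=
        CCCAux.fN_mul S H (H.inv_mem hh) x
      calc CCCAux.fN S H x = CCCAux.fN S H (h⁻¹ * x) := h7.symm
        _ ≤ bound (h⁻¹ * y) := h5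
        _ ≤ R₀ := Finset.le_sup hbB
    have h8 : (CCCAux.fN S H x : ℝ) ≤ (R₀ : ℝ) := by exact_mod_cast h6
    linarith [A.coe_nonneg]
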